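/- Let k ≥ 1 and let a : Fin (2k) → ℕ with a i > 0 for all i. In R = MvPolynomial (Fin 2) ℤ write x = X 0 and y = X 1, let ι = Fin (2k) ⊕ Fin 2, and define v : ι → R by v (inl i) = (a i) · x and v (inr j) = y for both j. Suppose π is a finite partition of ι into nonempty blocks and B₀ ∈ π satisfies ∏_{j ∈ B₀} v j = ∑_{B ∈ π, B ≠ B₀} ∏_{j ∈ B} v j. Then π has exactly two blocks, each of the two blocks contains exactly one of the two indices inr 0, inr 1, and each block contains exactly k of the indices inl i. -/

import Mathlib

open Finset

theorem stmt_5 (k : ℕ) (hk : 1 ≤ k) (a : Fin (2 * k) → ℕ) (ha : ∀ i, 0 < a i)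
    (v : Fin (2 * k) ⊕ Fin 2 → MvPolynomial (Fin 2) ℤ)
    (hv1 : ∀ i, v (Sum.inl i) = (a i : MvPolynomial (Fin 2) ℤ) * MvPolynomial.X 0)
    (hv2 : ∀ j, v (Sum.inr j) = MvPolynomial.X 1)
    (π : Finpartition (Finset.univ : Finset (Fin (2 * k) ⊕ Fin 2)))
    (B₀ : Finset (Fin (2 * k) ⊕ Fin 2)) (hB₀ : B₀ ∈ π.parts)
    (h : ∏ j ∈ B₀, v j = ∑ B ∈ π.parts.erase B₀, ∏ j ∈ B, v j) :
    π.parts.card = 2 ∧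
    (∃ B₁ ∈ π.parts, ∃ B₂ ∈ π.parts, B₁ ≠ B₂ ∧
      Sum.inr 0 ∈ B₁ ∧ Sum.inr 1 ∈ B₂) ∧
    (∀ B ∈ π.parts, (Finset.univ.filter (fun i : Fin (2 * k) => Sum.inl i ∈ B)).card = k) := by
  classical
  set e : Finset (Fin (2 * k) ⊕ Fin 2) → (Fin 2 →₀ ℕ) := fun B =>
    Finsupp.single 0 B.toLeft.card + Finsupp.single 1 B.toRight.card with he
  set c : Finset (Fin (2 * k) ⊕ Fin 2) → ℤ := fun B => ∏ i ∈ B.toLeft, (a i : ℤ) with hc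
  have hcpos : ∀ B, 0 < c B := by
    intro B
    exact Finset.prod_pos fun i _ => by exact_mod_cast ha i
  have key : ∀ B : Finset (Fin (2 * k) ⊕ Fin 2), ∏ j ∈ B, v j = MvPolynomial.monomial (e B) (c B) := by
    intro B
    conv_lhs => rw [← Finset.toLeft_disjSum_toRight (u := B)]
    rw [Finset.prod_disjSum]
    simp only [hv1, hv2]
    rw [Finset.prod_mul_distrib, Finset.prod_const, Finset.prod_const]
    have : (∏ i ∈ B.toLeft, ((a i : ℤ) : MvPolynomial (Fin 2) ℤ))
        = MvPolynomial.C (c B) := by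
      rw [hc]; push_cast [MvPolynomial.C_eq_coe_nat]; simp [map_prod]
    have h2 : ∀ i, ((a i : ℕ) : MvPolynomial (Fin 2) ℤ) = ((a i : ℤ) : MvPolynomial (Fin 2) ℤ) := by
      intro i; push_cast; ring
    simp only [h2]
    rw [this, MvPolynomial.X_pow_eq_monomial, MvPolynomial.X_pow_eq_monomial,
      mul_assoc, MvPolynomial.monomial_mul, MvPolynomial.C_mul_monomial]
    simp [he]
  simp only [key] at h
  -- erase is nonempty
  have hne : (π.parts.erase B₀).Nonempty := by
    by_contra hne
    rw [not_nonempty_iff_eq_empty] at hne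
    rw [hne, Finset.sum_empty, MvPolynomial.monomial_eq_zero] at h
    exact absurd h (hcpos B₀).ne'
  -- all parts have the same exponent
  have heq : ∀ B ∈ π.parts, e B = e B₀ := by
    intro B hB
    rcases eq_or_ne B B₀ with rfl | hBne
    · rfl
    have hB' : B ∈ π.parts.erase B₀ := Finset.mem_erase.2 ⟨hBne, hB⟩
    have hco := congrArg (MvPolynomial.coeff (e B)) h
    rw [MvPolynomial.coeff_sum] at hco
    have hrhs : 0 < ∑ B' ∈ π.parts.erase B₀,
        MvPolynomial.coeff (e B) (MvPolynomial.monomial (e B') (c B')) := by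
      apply Finset.sum_pos'
      · intro B' _
        rw [MvPolynomial.coeff_monomial]
        split
        · exact (hcpos _).le
        · exact le_refl 0
      · exact ⟨B, hB', by rw [MvPolynomial.coeff_monomial, if_pos rfl]; exact hcpos B⟩
    rw [← hco, MvPolynomial.coeff_monomial] at hrhs
    by_cases h' : e B₀ = e B
    · exact h'.symm
    · rw [if_neg h'] at hrhs; exact absurd hrhs (lt_irrefl 0)
  have hT : ∀ B ∈ π.parts, B.toLeft.card = B₀.toLeft.card := by
    intro B hB
    have := congrArg (fun f => f 0) (heq B hB)
    simpa [he, Finsupp.single_apply] using this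
  have hS : ∀ B ∈ π.parts, B.toRight.card = B₀.toRight.card := by
    intro B hB
    have := congrArg (fun f => f 1) (heq B hB)
    simpa [he, Finsupp.single_apply] using this
  -- pairwise disjoint toRight / toLeft
  have hdisj := π.supIndep.pairwiseDisjoint
  have hsumS : ∑ B ∈ π.parts, B.toRight.card = 2 := by
    have hb : π.parts.biUnion Finset.toRight = (Finset.univ : Finset (Fin 2)) := by
      ext j
      simp only [Finset.mem_biUnion, Finset.mem_toRight, Finset.mem_univ, iff_true]
      exact π.exists_mem (Finset.mem_univ _)
    rw [← Finset.card_biUnion, hb, Finset.card_univ, Fintype.card_fin]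
    intro B hB B' hB' hne'
    have := hdisj hB hB' hne'
    simp only [Function.onFun, id] at this
    rw [Finset.disjoint_left] at this; rw [Function.onFun, Finset.disjoint_left]
    intro x hx hx'
    exact this (Finset.mem_toRight.1 hx) (Finset.mem_toRight.1 hx')
  have hsumT : ∑ B ∈ π.parts, B.toLeft.card = 2 * k := by
    have hb : π.parts.biUnion Finset.toLeft = (Finset.univ : Finset (Fin (2 * k))) := by
      ext i
      simp only [Finset.mem_biUnion, Finset.mem_toLeft, Finset.mem_univ, iff_true]
      exact π.exists_mem (Finset.mem_univ _)
    rw [← Finset.card_biUnion, hb, Finset.card_univ, Fintype.card_fin]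
    intro B hB B' hB' hne'
    have := hdisj hB hB' hne'
    simp only [Function.onFun, id] at this
    rw [Finset.disjoint_left] at this; rw [Function.onFun, Finset.disjoint_left]
    intro x hx hx'
    exact this (Finset.mem_toLeft.1 hx) (Finset.mem_toLeft.1 hx')
  rw [Finset.sum_congr rfl hS, Finset.sum_const, smul_eq_mul] at hsumS
  rw [Finset.sum_congr rfl hT, Finset.sum_const, smul_eq_mul] at hsumT
  have hm2 : 2 ≤ π.parts.card := by
    obtain ⟨B, hB⟩ := hne
    exact Finset.one_lt_card.2 ⟨B₀, hB₀, B, Finset.mem_of_mem_erase hB,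
      (Finset.ne_of_mem_erase hB).symm⟩
  have hmdvd : π.parts.card ∣ 2 := ⟨_, hsumS.symm⟩
  have hmcard : π.parts.card = 2 := le_antisymm (Nat.le_of_dvd (by norm_num) hmdvd) hm2
  have hs1 : B₀.toRight.card = 1 := by rw [hmcard] at hsumS; omega
  have ht1 : B₀.toLeft.card = k := by rw [hmcard] at hsumT; omega
  refine ⟨hmcard, ?_, ?_⟩
  · obtain ⟨B₁, hB₁, h01⟩ := π.exists_mem (Finset.mem_univ (Sum.inr 0))
    obtain ⟨B₂, hB₂, h11⟩ := π.exists_mem (Finset.mem_univ (Sum.inr 1))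
    refine ⟨B₁, hB₁, B₂, hB₂, ?_, h01, h11⟩
    rintro rfl
    have : 1 < B₁.toRight.card := Finset.one_lt_card.2
      ⟨0, Finset.mem_toRight.2 h01, 1, Finset.mem_toRight.2 h11, by decide⟩
    rw [hS B₁ hB₁, hs1] at this
    exact absurd this (lt_irrefl 1)
  · intro B hB
    have hfil : Finset.univ.filter (fun i : Fin (2 * k) => Sum.inl i ∈ B) = B.toLeft := by
      ext i; simp
    rw [hfil, hT B hB, ht1]
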